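/- The pure payoff region of the EWL approach with two-parameter strategies U(θ,α,0) (θ ∈ [0,π], α ∈ [0,2π)) applied to any 2×2 bimatrix game equals the cooperative payoff region, i.e., the convex hull of the four pure payoff vectors {(a_{jk}, b_{jk}) : j,k ∈ {0,1}}. -/
import Mathlib


set_option maxHeartbeats 1000000

open Real

/-- The EWL payoff vector for a 2×2 bimatrix game with payoff vectors
`P00 P01 P10 P11 : ℝ × ℝ`, at the profile `(U(θ1,α1,β1), U(θ2,α2,β2))`. -/
noncomputable def ewlV (P00 P01 P10 P11 : ℝ × ℝ) (θ1 α1 β1 θ2 α2 β2 : ℝ) : ℝ × ℝ :=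
  ((cos (α1 + α2) * cos (θ1/2) * cos (θ2/2) +
    sin (β1 + β2) * sin (θ1/2) * sin (θ2/2))^2) • P00 +
  ((sin (α2 - β1) * sin (θ1/2) * cos (θ2/2) +
    cos (α1 - β2) * cos (θ1/2) * sin (θ2/2))^2) • P01 +
  ((cos (α2 - β1) * sin (θ1/2) * cos (θ2/2) +
    sin (α1 - β2) * cos (θ1/2) * sin (θ2/2))^2) • P10 +
  ((cos (β1 + β2) * sin (θ1/2) * sin (θ2/2) -
    sin (α1 + α2) * cos (θ1/2) * cos (θ2/2))^2) • P11

lemma comb_mem (p0 p1 p2 p3 : ℝ × ℝ) {w0 w1 w2 w3 : ℝ} (h0 : 0 ≤ w0) (h1 : 0 ≤ w1)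
    (h2 : 0 ≤ w2) (h3 : 0 ≤ w3) (hs : w0 + w1 + w2 + w3 = 1) :
    w0 • p0 + w1 • p1 + w2 • p2 + w3 • p3 ∈ convexHull ℝ ({p0, p1, p2, p3} : Set (ℝ × ℝ)) := by
  have := Finset.centerMass_mem_convexHull (Finset.univ : Finset (Fin 4))
    (w := ![w0,w1,w2,w3]) (z := ![p0,p1,p2,p3]) (s := ({p0, p1, p2, p3} : Set (ℝ × ℝ)))
    (by intro i _; fin_cases i <;> assumption)
    (by simp [Fin.sum_univ_four]; linarith)
    (by intro i _; fin_cases i <;> simp [Set.mem_insert_iff])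
  have hs' : w0 + (w1 + (w2 + w3)) = 1 := by linarith
  simpa [Finset.centerMass, Fin.sum_univ_four, hs', add_assoc] using this

lemma ewlV_eval (P00 P01 P10 P11 : ℝ × ℝ) {t p q : ℝ} (ht0 : 0 ≤ t) (ht1 : t ≤ 1)
    (hp0 : 0 ≤ p) (hp1 : p ≤ 1) (hq0 : 0 ≤ q) (hq1 : q ≤ 1) :
    ewlV P00 P01 P10 P11 (2 * arcsin √t) (π - arcsin √p - arccos √q) 0 0 (arccos √q) 0
      = ((1-p)*(1-t)) • P00 + ((1-q)*t) • P01 + (q*t) • P10 + (p*(1-t)) • P11 := by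
  have e1 : (2 * arcsin √t) / 2 = arcsin √t := by ring
  have e2 : (π - arcsin √p - arccos √q) + arccos √q = π - arcsin √p := by ring
  have sq1 : (√t)^2 = t := Real.sq_sqrt ht0
  have sq2 : (√p)^2 = p := Real.sq_sqrt hp0
  have sq3 : (√q)^2 = q := Real.sq_sqrt hq0
  have hA : (-1:ℝ) ≤ √t := le_trans (by norm_num) (Real.sqrt_nonneg t)
  have hB : √t ≤ 1 := Real.sqrt_le_one.mpr ht1
  have hE : (-1:ℝ) ≤ √p := le_trans (by norm_num) (Real.sqrt_nonneg p)
  have hF : √p ≤ 1 := Real.sqrt_le_one.mpr hp1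
  have hC : (-1:ℝ) ≤ √q := le_trans (by norm_num) (Real.sqrt_nonneg q)
  have hD : √q ≤ 1 := Real.sqrt_le_one.mpr hq1
  unfold ewlV
  rw [e1, e2]
  simp only [add_zero, sub_zero, zero_add, sin_zero, cos_zero, zero_div, mul_zero, zero_mul,
    mul_one, Real.sin_pi_sub, Real.cos_pi_sub, Real.cos_arcsin, Real.sin_arcsin hA hB, Real.sin_arcsin hE hF,
    Real.sin_arccos, Real.cos_arccos hC hD, sq1, sq2, sq3]
  have A : (√(1-p))^2 = 1-p := Real.sq_sqrt (by linarith)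
  have B : (√(1-t))^2 = 1-t := Real.sq_sqrt (by linarith)
  have C : (√(1-q))^2 = 1-q := Real.sq_sqrt (by linarith)
  match_scalars <;> nlinarith [A, B, C, sq1, sq2, sq3]

/-- The pure payoff region of the EWL scheme with two-parameter strategies
`U(θ,α,0)`, `θ ∈ [0,π]`, `α ∈ [0,2π)`, equals the cooperative payoff region
(the convex hull of the four pure payoff vectors). -/
theorem ewl_two_parameter_payoff_region_eq_convex_hull (P00 P01 P10 P11 : ℝ × ℝ) :
    {x : ℝ × ℝ | ∃ θ1 ∈ Set.Icc 0 π, ∃ α1 ∈ Set.Ico 0 (2*π),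
        ∃ θ2 ∈ Set.Icc 0 π, ∃ α2 ∈ Set.Ico 0 (2*π),
        x = ewlV P00 P01 P10 P11 θ1 α1 0 θ2 α2 0} =
      convexHull ℝ {P00, P01, P10, P11} := by
  ext x
  simp only [Set.mem_setOf_eq]
  constructor
  · rintro ⟨θ1, hθ1, α1, hα1, θ2, hθ2, α2, hα2, rfl⟩
    unfold ewlV
    refine comb_mem _ _ _ _ (sq_nonneg _) (sq_nonneg _) (sq_nonneg _) (sq_nonneg _) ?_
    simp only [add_zero, zero_add, sub_zero, sin_zero, cos_zero, zero_mul, mul_zero]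
    rw [cos_add, sin_add]
    linear_combination
      ((cos (θ1/2))^2*(cos (θ2/2))^2*(sin α2 ^2 + cos α2 ^2) + (cos (θ1/2))^2*(sin (θ2/2))^2)
          * sin_sq_add_cos_sq α1 +
        ((cos (θ1/2))^2*(cos (θ2/2))^2 + (sin (θ1/2))^2*(cos (θ2/2))^2) * sin_sq_add_cos_sq α2 +
        ((cos (θ2/2))^2 + (sin (θ2/2))^2) * sin_sq_add_cos_sq (θ1/2) + sin_sq_add_cos_sq (θ2/2)
  · intro hx
    have hset : ({P00, P01, P10, P11} : Set (ℝ × ℝ)) = {P00, P11} ∪ {P01, P10} := by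
      ext y
      simp only [Set.mem_insert_iff, Set.mem_singleton_iff, Set.mem_union]
      tauto
    rw [hset, convexHull_union (by simp) (by simp), mem_convexJoin] at hx
    obtain ⟨a, ha, b, hb, hab⟩ := hx
    rw [convexHull_pair] at ha hb
    obtain ⟨u1, v1, hu1, hv1, huv1, rfl⟩ := ha
    obtain ⟨u2, v2, hu2, hv2, huv2, rfl⟩ := hb
    obtain ⟨u, v, hu, hv, huv, rfl⟩ := hab
    refine ⟨2 * arcsin √v,
      ⟨mul_nonneg (by norm_num) (Real.arcsin_nonneg.mpr (Real.sqrt_nonneg v)),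
       by linarith [Real.arcsin_le_pi_div_two (√v)]⟩,
      π - arcsin √v1 - arccos √v2,
      ⟨by linarith [Real.arcsin_le_pi_div_two (√v1),
            Real.arccos_le_pi_div_two.mpr (Real.sqrt_nonneg v2)],
       by linarith [pi_pos, Real.arccos_nonneg (√v2), Real.arcsin_nonneg.mpr (Real.sqrt_nonneg v1)]⟩,
      0, ⟨le_refl 0, le_of_lt pi_pos⟩,
      arccos √v2, ⟨Real.arccos_nonneg _, by linarith [Real.arccos_le_pi (√v2), pi_pos]⟩, ?_⟩
    rw [ewlV_eval P00 P01 P10 P11 hv (by linarith) hv1 (by linarith) hv2 (by linarith)]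
    obtain rfl : u = 1 - v := by linarith
    obtain rfl : u1 = 1 - v1 := by linarith
    obtain rfl : u2 = 1 - v2 := by linarith
    module
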